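/- Let N ≥ 2 be an integer and y ∈ [0, 1/2]. Define A_N(y) = ((1-3y+2y²)/(1-3y+(N+2)y²))·(1 - y²/(1-3y+3y²))^(N-2) and C_N(y) = (1-3y-(N-4)y²)/(1-3y+(N+2)y²). Then A_N(y) ≥ C_N(y), provided 1-3y+(N+2)y² > 0. -/
import Mathlib


theorem stmt_12 (N : ℕ) (hN : 2 ≤ N) (y : ℝ) (hy : y ∈ Set.Icc (0:ℝ) (1/2))
    (hden : 0 < 1 - 3 * y + ((N:ℝ) + 2) * y ^ 2) :
    (1 - 3 * y + 2 * y ^ 2) / (1 - 3 * y + ((N:ℝ) + 2) * y ^ 2)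
        * (1 - y ^ 2 / (1 - 3 * y + 3 * y ^ 2)) ^ (N - 2)
      ≥ (1 - 3 * y - ((N:ℝ) - 4) * y ^ 2) / (1 - 3 * y + ((N:ℝ) + 2) * y ^ 2) := by
  obtain ⟨hy0, hy1⟩ := hy
  have hD : 0 < 1 - 3 * y + 3 * y ^ 2 := by nlinarith
  have hnum : 0 ≤ 1 - 3 * y + 2 * y ^ 2 := by nlinarith
  have hx1 : y ^ 2 / (1 - 3 * y + 3 * y ^ 2) ≤ 1 := by
    rw [div_le_one hD]; nlinarith
  have hN2 : ((N - 2 : ℕ) : ℝ) = (N : ℝ) - 2 := by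
    push_cast [Nat.cast_sub hN]; ring
  have hbern : (1 : ℝ) + (N - 2 : ℕ) * (-(y ^ 2 / (1 - 3 * y + 3 * y ^ 2)))
      ≤ (1 + (-(y ^ 2 / (1 - 3 * y + 3 * y ^ 2)))) ^ (N - 2) := by
    apply one_add_mul_le_pow
    linarith
  have hpow : (1 : ℝ) - ((N:ℝ) - 2) * (y ^ 2 / (1 - 3 * y + 3 * y ^ 2))
      ≤ (1 - y ^ 2 / (1 - 3 * y + 3 * y ^ 2)) ^ (N - 2) := by
    rw [hN2] at hbern
    calc (1 : ℝ) - ((N:ℝ) - 2) * (y ^ 2 / (1 - 3 * y + 3 * y ^ 2))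
        = 1 + ((N:ℝ) - 2) * (-(y ^ 2 / (1 - 3 * y + 3 * y ^ 2))) := by ring
      _ ≤ (1 + (-(y ^ 2 / (1 - 3 * y + 3 * y ^ 2)))) ^ (N - 2) := hbern
      _ = (1 - y ^ 2 / (1 - 3 * y + 3 * y ^ 2)) ^ (N - 2) := by ring_nf
  have hmain : (1 - 3 * y - ((N:ℝ) - 4) * y ^ 2)
      ≤ (1 - 3 * y + 2 * y ^ 2) * (1 - ((N:ℝ) - 2) * (y ^ 2 / (1 - 3 * y + 3 * y ^ 2))) := by
    rw [div_eq_mul_inv]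
    have hinv : 0 < (1 - 3 * y + 3 * y ^ 2)⁻¹ := inv_pos.mpr hD
    have key : (1 - 3 * y - ((N:ℝ) - 4) * y ^ 2) * (1 - 3 * y + 3 * y ^ 2)
        ≤ (1 - 3 * y + 2 * y ^ 2) * ((1 - 3 * y + 3 * y ^ 2) - ((N:ℝ) - 2) * y ^ 2) := by
      have hNc : (2 : ℝ) ≤ (N : ℝ) := by exact_mod_cast hN
      nlinarith [sq_nonneg (y ^ 2), sq_nonneg y]
    have := mul_le_mul_of_nonneg_right key (le_of_lt hinv)
    calc (1 - 3 * y - ((N:ℝ) - 4) * y ^ 2)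
        = (1 - 3 * y - ((N:ℝ) - 4) * y ^ 2) * (1 - 3 * y + 3 * y ^ 2) * (1 - 3 * y + 3 * y ^ 2)⁻¹ := by
          field_simp
      _ ≤ (1 - 3 * y + 2 * y ^ 2) * ((1 - 3 * y + 3 * y ^ 2) - ((N:ℝ) - 2) * y ^ 2) * (1 - 3 * y + 3 * y ^ 2)⁻¹ := this
      _ = (1 - 3 * y + 2 * y ^ 2) * (1 - ((N:ℝ) - 2) * (y ^ 2 * (1 - 3 * y + 3 * y ^ 2)⁻¹)) := by
          field_simp
  rw [ge_iff_le, div_mul_eq_mul_div, div_le_div_iff₀ hden hden]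
  have h2 : (1 - 3 * y + 2 * y ^ 2) * (1 - ((N:ℝ) - 2) * (y ^ 2 / (1 - 3 * y + 3 * y ^ 2)))
      ≤ (1 - 3 * y + 2 * y ^ 2) * (1 - y ^ 2 / (1 - 3 * y + 3 * y ^ 2)) ^ (N - 2) :=
    mul_le_mul_of_nonneg_left hpow hnum
  nlinarith [le_trans hmain h2]
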